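/- Let ρ : ℝ³ → [0,∞) be measurable, vanishing outside the cylinder D, with ρ ≤ M everywhere, and define E(x) = ∫ (x−y)|x−y|⁻³ ρ(y) dy. Then there is a constant C, depending only on A, such that E is quasi-Lipschitz: for all x, y ∈ ℝ³ with 0 < |x−y| ≤ 1, |E(x) − E(y)| ≤ C M |x−y| (1 + |log |x−y||), and for all x, y with |x−y| ≥ 1, |E(x) − E(y)| ≤ C M |x−y|. -/

import Mathlib

noncomputable section
open MeasureTheory Real Set
open intervalIntegral

/-- Three-dimensional Euclidean space. -/
abbrev E3 : Type := EuclideanSpace ℝ (Fin 3)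

/-- The cross product on `ℝ³`. -/
def cross3 (a b : E3) : E3 :=
  WithLp.toLp 2 ![a 1 * b 2 - a 2 * b 1, a 2 * b 0 - a 0 * b 2, a 0 * b 1 - a 1 * b 0]

/-- The open cylinder of radius `A` about the `x₁`-axis. -/
def cyl (A : ℝ) : Set E3 := {x : E3 | x 1 ^ 2 + x 2 ^ 2 < A ^ 2}

/-- The external magnetic field `B(x) = ((A² - (x₂²+x₃²))^{-θ}, 0, 0)`. -/
def Bf (A θ : ℝ) (x : E3) : E3 := WithLp.toLp 2 ![(A ^ 2 - (x 1 ^ 2 + x 2 ^ 2)) ^ (-θ), 0, 0]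

lemma cyl_mble (A : ℝ) : MeasurableSet (cyl A) := by
  have : cyl A = (fun x : E3 => x 1 ^ 2 + x 2 ^ 2) ⁻¹' (Iio (A ^ 2)) := rfl
  rw [this]
  have h1 : Measurable fun x : E3 => x 1 ^ 2 + x 2 ^ 2 :=
    by fun_prop
  exact h1 measurableSet_Iio

lemma coord_le_norm (u : E3) (i : Fin 3) : |u i| ≤ ‖u‖ := by
  rw [EuclideanSpace.norm_eq]
  rw [← Real.sqrt_sq_eq_abs]
  apply Real.sqrt_le_sqrt
  have : u i ^ 2 ≤ ∑ j, u j ^ 2 := Finset.single_le_sum (f := fun j => u j ^ 2)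
    (fun j _ => sq_nonneg _) (Finset.mem_univ i)
  simpa [sq_abs] using this

/-- volume of a coordinate box in E3 -/
lemma volume_box (a b : Fin 3 → ℝ) :
    volume {z : E3 | ∀ i, z i ∈ Ioo (a i) (b i)} =
      ∏ i, ENNReal.ofReal (b i - a i) := by
  have hmp := EuclideanSpace.volume_preserving_symm_measurableEquiv_toLp (Fin 3)
  have : {z : E3 | ∀ i, z i ∈ Ioo (a i) (b i)} =
      (MeasurableEquiv.toLp 2 (Fin 3 → ℝ)).symm ⁻¹' (univ.pi fun i => Ioo (a i) (b i)) := by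
    ext z; simp [Set.mem_pi]
  rw [this, hmp.measure_preimage]
  · rw [volume_pi_pi]
    simp [Real.volume_Ioo]
  · exact (MeasurableSet.univ_pi fun i => measurableSet_Ioo).nullMeasurableSet

lemma norm_sub_meas (x : E3) : Measurable fun z : E3 => ‖x - z‖ :=
  (continuous_const.sub continuous_id).norm.measurable

/-- Layer cake reduction for integrals of `‖x-z‖^(-p)` over a set. -/
lemma layer_le (S : Set E3) (hS : MeasurableSet S) (x : E3) (p : ℕ) (hp : 0 < p) :
    ∫⁻ z in S, ENNReal.ofReal ((‖x - z‖ ^ p)⁻¹) ≤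
      ∫⁻ t in Ioi (0:ℝ), volume (S ∩ Metric.ball x ((t⁻¹) ^ ((p:ℝ))⁻¹)) := by
  set g : E3 → ℝ := fun z => (‖x - z‖ ^ p)⁻¹ with hgdef
  have hg : Measurable g := ((norm_sub_meas x).pow_const p).inv
  have hnn : 0 ≤ᵐ[volume] S.indicator g :=
    Filter.Eventually.of_forall fun z => Set.indicator_nonneg (fun z _ => by positivity) z
  have key := lintegral_eq_lintegral_meas_lt volume hnn (hg.indicator hS).aemeasurable
  have lhs : ∫⁻ z in S, ENNReal.ofReal (g z) = ∫⁻ z, ENNReal.ofReal (S.indicator g z) := by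
    rw [← lintegral_indicator hS]
    refine lintegral_congr fun z => ?_
    by_cases hz : z ∈ S <;> simp [Set.indicator_of_mem, Set.indicator_of_notMem, hz]
  rw [lhs, key]
  refine lintegral_mono_ae ?_
  rw [ae_restrict_iff' measurableSet_Ioi]
  refine Filter.Eventually.of_forall fun t ht => ?_
  refine measure_mono fun z hz => ?_
  simp only [mem_setOf_eq] at hz
  have hzS : z ∈ S := by
    by_contra hzS
    rw [Set.indicator_of_notMem hzS] at hz
    exact absurd hz (not_lt.2 (le_of_lt ht))
  rw [Set.indicator_of_mem hzS] at hz
  refine ⟨hzS, ?_⟩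
  have ha : 0 < ‖x - z‖ ^ p := by
    rcases (pow_nonneg (norm_nonneg (x - z)) p).lt_or_eq with h | h
    · exact h
    · exfalso; rw [hgdef] at hz; simp only at hz
      rw [← h] at hz; simp at hz
      have h3 : (0:ℝ) < t := ht; linarith
  have ht' : 0 < t := ht
  have hlt : ‖x - z‖ ^ p < t⁻¹ := by
    have h1 : t * (‖x - z‖ ^ p) < 1 := by
      have h0 := mul_lt_mul_of_pos_right hz ha
      rwa [inv_mul_cancel₀ ha.ne'] at h0
    have h2 : t * (‖x - z‖ ^ p) < t * t⁻¹ := by rw [mul_inv_cancel₀ ht'.ne']; exact h1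
    exact lt_of_mul_lt_mul_left h2 ht'.le
  set b : ℝ := (t⁻¹) ^ ((p:ℝ))⁻¹ with hb
  have hbpos : 0 < b := Real.rpow_pos_of_pos (inv_pos.2 ht') _
  have hbp : b ^ p = t⁻¹ := by
    rw [hb, ← Real.rpow_natCast ((t⁻¹) ^ ((p:ℝ))⁻¹) p, ← Real.rpow_mul (le_of_lt (inv_pos.2 ht')),
      inv_mul_cancel₀ (by exact_mod_cast hp.ne'), Real.rpow_one]
  have : ‖x - z‖ < b := by
    by_contra hcon
    push_neg at hcon
    have := pow_le_pow_left₀ (le_of_lt hbpos) hcon p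
    rw [hbp] at this
    linarith
  rw [Metric.mem_ball, dist_comm, dist_eq_norm]
  exact this


lemma volume_ball_E3 (x : E3) {s : ℝ} (hs : 0 ≤ s) :
    volume (Metric.ball x s) = ENNReal.ofReal (s ^ 3) * volume (Metric.ball (0:E3) 1) := by
  have := Measure.addHaar_ball (volume : Measure E3) x hs
  simpa [finrank_euclideanSpace_fin] using this

lemma lint_rpow_Ioc {q : ℝ} (hq : -1 < q) {a : ℝ} (ha : 0 < a) :
    ∫⁻ t in Ioc (0:ℝ) a, ENNReal.ofReal (t ^ q) = ENNReal.ofReal (a ^ (q + 1) / (q + 1)) := by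
  have hint : IntegrableOn (fun t : ℝ => t ^ q) (Ioc 0 a) volume :=
    (intervalIntegrable_rpow' hq (a := 0) (b := a)).1
  have hnn : 0 ≤ᵐ[volume.restrict (Ioc (0:ℝ) a)] fun t : ℝ => t ^ q := by
    filter_upwards [ae_restrict_mem measurableSet_Ioc] with t ht
    exact Real.rpow_nonneg ht.1.le q
  rw [← ofReal_integral_eq_lintegral_ofReal hint hnn]
  congr 1
  rw [← intervalIntegral.integral_of_le ha.le, integral_rpow (Or.inl hq)]
  rw [Real.zero_rpow (by linarith)]
  ring

lemma lint_rpow_Ioi {q : ℝ} (hq : q < -1) {a : ℝ} (ha : 0 < a) :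
    ∫⁻ t in Ioi a, ENNReal.ofReal (t ^ q) = ENNReal.ofReal (-a ^ (q + 1) / (q + 1)) := by
  have hint : IntegrableOn (fun t : ℝ => t ^ q) (Ioi a) volume :=
    integrableOn_Ioi_rpow_of_lt hq ha
  have hnn : 0 ≤ᵐ[volume.restrict (Ioi a)] fun t : ℝ => t ^ q := by
    filter_upwards [ae_restrict_mem measurableSet_Ioi] with t ht
    exact Real.rpow_nonneg (ha.trans ht).le q
  rw [← ofReal_integral_eq_lintegral_ofReal hint hnn]
  congr 1
  rw [integral_Ioi_rpow_of_lt hq ha]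

lemma lint_inv_Ioc {a b : ℝ} (ha : 0 < a) (hab : a ≤ b) :
    ∫⁻ t in Ioc a b, ENNReal.ofReal t⁻¹ = ENNReal.ofReal (Real.log (b / a)) := by
  have hint : IntegrableOn (fun t : ℝ => t⁻¹) (Ioc a b) volume := by
    refine (intervalIntegral.intervalIntegrable_inv (f := fun t : ℝ => t) (μ := volume)
      (fun t ht => ?_) (Continuous.continuousOn continuous_id)).1
    rw [Set.uIcc_of_le hab] at ht
    exact ne_of_gt (lt_of_lt_of_le ha ht.1)
  have hnn : 0 ≤ᵐ[volume.restrict (Ioc a b)] fun t : ℝ => t⁻¹ := by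
    filter_upwards [ae_restrict_mem measurableSet_Ioc] with t ht
    exact inv_nonneg.2 (ha.trans ht.1).le
  rw [← ofReal_integral_eq_lintegral_ofReal hint hnn]
  congr 1
  rw [← intervalIntegral.integral_of_le hab, integral_inv_of_pos ha (ha.trans_le hab)]

lemma s_cube2 {t : ℝ} (ht : 0 < t) :
    ((t⁻¹) ^ (((2:ℕ):ℝ))⁻¹) ^ (3:ℕ) = t ^ (-(3/2) : ℝ) := by
  rw [← Real.rpow_natCast ((t⁻¹) ^ (((2:ℕ):ℝ))⁻¹) 3, ← Real.rpow_mul (inv_nonneg.2 ht.le),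
    ← Real.rpow_neg_one t, ← Real.rpow_mul ht.le]
  norm_num

lemma s_cube3 {t : ℝ} (ht : 0 < t) :
    ((t⁻¹) ^ (((3:ℕ):ℝ))⁻¹) ^ (3:ℕ) = t⁻¹ := by
  rw [← Real.rpow_natCast ((t⁻¹) ^ (((3:ℕ):ℝ))⁻¹) 3, ← Real.rpow_mul (inv_nonneg.2 ht.le)]
  norm_num

lemma est_ball (x : E3) {r : ℝ} (hr : 0 < r) :
    ∫⁻ z in Metric.ball x r, ENNReal.ofReal ((‖x - z‖ ^ 2)⁻¹)
      ≤ ENNReal.ofReal (3 * r) * volume (Metric.ball (0:E3) 1) := by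
  set B := volume (Metric.ball (0:E3) 1) with hB
  refine le_trans (layer_le _ measurableSet_ball x 2 two_pos) ?_
  set a : ℝ := (r ^ 2)⁻¹ with ha
  have ha0 : 0 < a := by positivity
  rw [← Ioc_union_Ioi_eq_Ioi ha0.le,
    lintegral_union measurableSet_Ioi (Set.Ioc_disjoint_Ioi le_rfl)]
  have h1 : ∫⁻ t in Ioc (0:ℝ) a, volume (Metric.ball x r ∩ Metric.ball x ((t⁻¹) ^ (((2:ℕ):ℝ))⁻¹))
      ≤ ENNReal.ofReal r * B := by
    calc ∫⁻ t in Ioc (0:ℝ) a, volume (Metric.ball x r ∩ Metric.ball x ((t⁻¹) ^ (((2:ℕ):ℝ))⁻¹))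
        ≤ ∫⁻ _t in Ioc (0:ℝ) a, ENNReal.ofReal (r ^ 3) * B := by
          refine lintegral_mono fun t => ?_
          rw [← volume_ball_E3 x hr.le]
          exact measure_mono inter_subset_left
      _ = ENNReal.ofReal (r ^ 3) * B * ENNReal.ofReal a := by
          rw [setLIntegral_const, Real.volume_Ioc, sub_zero]
      _ = ENNReal.ofReal (r ^ 3 * a) * B := by
          rw [ENNReal.ofReal_mul (by positivity), mul_right_comm]
      _ = ENNReal.ofReal r * B := by
          congr 2
          rw [ha]; field_simp
  have h2 : ∫⁻ t in Ioi a, volume (Metric.ball x r ∩ Metric.ball x ((t⁻¹) ^ (((2:ℕ):ℝ))⁻¹))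
      ≤ ENNReal.ofReal (2 * r) * B := by
    have step : ∫⁻ t in Ioi a, volume (Metric.ball x r ∩ Metric.ball x ((t⁻¹) ^ (((2:ℕ):ℝ))⁻¹))
        ≤ ∫⁻ t in Ioi a, ENNReal.ofReal (t ^ (-(3/2) : ℝ)) * B := by
      refine lintegral_mono_ae ?_
      filter_upwards [ae_restrict_mem measurableSet_Ioi] with t ht
      have ht0 : 0 < t := ha0.trans ht
      have hs0 : (0:ℝ) ≤ (t⁻¹) ^ (((2:ℕ):ℝ))⁻¹ := Real.rpow_nonneg (inv_nonneg.2 ht0.le) _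
      rw [← s_cube2 ht0, ← volume_ball_E3 x hs0]
      exact measure_mono inter_subset_right
    refine step.trans ?_
    rw [lintegral_mul_const _ (by fun_prop : Measurable fun t : ℝ => ENNReal.ofReal (t ^ (-(3/2):ℝ))),
      lint_rpow_Ioi (by norm_num : (-(3/2):ℝ) < -1) ha0]
    have : -a ^ ((-(3/2):ℝ) + 1) / ((-(3/2):ℝ) + 1) = 2 * a ^ ((-(1/2)):ℝ) := by
      norm_num
      ring
    rw [this]
    have haval : a ^ ((-(1/2)):ℝ) = r := by
      have : a = r ^ ((-2):ℝ) := by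
        rw [Real.rpow_neg hr.le, ha, ← Real.rpow_natCast r 2]
        norm_num
      rw [this, ← Real.rpow_mul hr.le]
      norm_num
    rw [haval]
  calc _ ≤ ENNReal.ofReal r * B + ENNReal.ofReal (2 * r) * B := add_le_add h1 h2
    _ = ENNReal.ofReal (3 * r) * B := by
        rw [← add_mul, ← ENNReal.ofReal_add (by positivity) (by positivity)]
        congr 2
        ring

lemma s_val2 {t : ℝ} (ht : 0 < t) :
    (t⁻¹) ^ (((2:ℕ):ℝ))⁻¹ = t ^ (-(1/2):ℝ) := by
  rw [← Real.rpow_neg_one t, ← Real.rpow_mul ht.le]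
  norm_num

lemma s_val3 {t : ℝ} (ht : 0 < t) :
    (t⁻¹) ^ (((3:ℕ):ℝ))⁻¹ = t ^ (-(1/3):ℝ) := by
  rw [← Real.rpow_neg_one t, ← Real.rpow_mul ht.le]
  norm_num

lemma slab (A : ℝ) (hA : 0 < A) (x : E3) {s : ℝ} (hs : 0 < s) :
    volume (cyl A ∩ Metric.ball x s) ≤ ENNReal.ofReal (8 * A ^ 2 * s) := by
  have hsub : cyl A ∩ Metric.ball x s ⊆
      {z : E3 | ∀ i, z i ∈ Ioo (![x 0 - s, -A, -A] i) (![x 0 + s, A, A] i)} := by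
    rintro z ⟨hz1, hz2⟩
    have hz1' : z 1 ^ 2 + z 2 ^ 2 < A ^ 2 := hz1
    have hdist : ‖z - x‖ < s := by rwa [Metric.mem_ball, dist_eq_norm] at hz2
    have h0 : |z 0 - x 0| < s := by
      have := coord_le_norm (z - x) 0
      simp only [PiLp.sub_apply] at this
      linarith
    have habs1 : |z 1| < A := by
      nlinarith [sq_abs (z 1), sq_nonneg (z 2), abs_nonneg (z 1)]
    have habs2 : |z 2| < A := by
      nlinarith [sq_abs (z 2), sq_nonneg (z 1), abs_nonneg (z 2)]
    intro i
    have h0' := abs_lt.1 h0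
    have h1' := abs_lt.1 habs1
    have h2' := abs_lt.1 habs2
    fin_cases i
    · show z 0 ∈ Ioo (x 0 - s) (x 0 + s)
      exact mem_Ioo.2 ⟨by linarith [h0'.1], by linarith [h0'.2]⟩
    · show z 1 ∈ Ioo (-A) A
      exact mem_Ioo.2 ⟨h1'.1, h1'.2⟩
    · show z 2 ∈ Ioo (-A) A
      exact mem_Ioo.2 ⟨h2'.1, h2'.2⟩
  refine le_trans (measure_mono hsub) ?_
  rw [volume_box]
  rw [Fin.prod_univ_three]
  simp only [Matrix.cons_val_zero, Matrix.cons_val_one, Matrix.head_cons,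
    Matrix.cons_val_two, Matrix.tail_cons]
  have e0 : x 0 + s - (x 0 - s) = 2 * s := by ring
  have e1 : A - -A = 2 * A := by ring
  rw [e0, e1, ← ENNReal.ofReal_mul (by positivity), ← ENNReal.ofReal_mul (by positivity)]
  refine le_of_eq ?_
  congr 1
  ring

lemma est_cyl (A : ℝ) (hA : 0 < A) (x : E3) :
    ∫⁻ z in cyl A, ENNReal.ofReal ((‖x - z‖ ^ 2)⁻¹)
      ≤ ENNReal.ofReal (16 * A ^ 2) + ENNReal.ofReal 2 * volume (Metric.ball (0:E3) 1) := by
  set B := volume (Metric.ball (0:E3) 1) with hB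
  refine le_trans (layer_le _ (cyl_mble A) x 2 two_pos) ?_
  rw [← Ioc_union_Ioi_eq_Ioi (zero_le_one : (0:ℝ) ≤ 1),
    lintegral_union measurableSet_Ioi (Set.Ioc_disjoint_Ioi le_rfl)]
  have h1 : ∫⁻ t in Ioc (0:ℝ) 1, volume (cyl A ∩ Metric.ball x ((t⁻¹) ^ (((2:ℕ):ℝ))⁻¹))
      ≤ ENNReal.ofReal (16 * A ^ 2) := by
    have step : ∫⁻ t in Ioc (0:ℝ) 1, volume (cyl A ∩ Metric.ball x ((t⁻¹) ^ (((2:ℕ):ℝ))⁻¹))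
        ≤ ∫⁻ t in Ioc (0:ℝ) 1, ENNReal.ofReal (8 * A ^ 2) * ENNReal.ofReal (t ^ (-(1/2):ℝ)) := by
      refine lintegral_mono_ae ?_
      filter_upwards [ae_restrict_mem measurableSet_Ioc] with t ht
      have ht0 : 0 < t := ht.1
      have hs0 : 0 < (t⁻¹) ^ (((2:ℕ):ℝ))⁻¹ := Real.rpow_pos_of_pos (inv_pos.2 ht0) _
      refine le_trans (slab A hA x hs0) ?_
      rw [s_val2 ht0, ← ENNReal.ofReal_mul (by positivity)]
    refine step.trans ?_
    rw [lintegral_const_mul _ (by fun_prop : Measurable fun t : ℝ => ENNReal.ofReal (t ^ (-(1/2):ℝ))),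
      lint_rpow_Ioc (by norm_num : (-1:ℝ) < -(1/2)) one_pos]
    rw [← ENNReal.ofReal_mul (by positivity)]
    apply ENNReal.ofReal_le_ofReal
    rw [Real.one_rpow]
    norm_num
    linarith
  have h2 : ∫⁻ t in Ioi (1:ℝ), volume (cyl A ∩ Metric.ball x ((t⁻¹) ^ (((2:ℕ):ℝ))⁻¹))
      ≤ ENNReal.ofReal 2 * B := by
    have step : ∫⁻ t in Ioi (1:ℝ), volume (cyl A ∩ Metric.ball x ((t⁻¹) ^ (((2:ℕ):ℝ))⁻¹))
        ≤ ∫⁻ t in Ioi (1:ℝ), ENNReal.ofReal (t ^ (-(3/2):ℝ)) * B := by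
      refine lintegral_mono_ae ?_
      filter_upwards [ae_restrict_mem measurableSet_Ioi] with t ht
      have ht0 : (0:ℝ) < t := lt_trans one_pos ht
      have hs0 : (0:ℝ) ≤ (t⁻¹) ^ (((2:ℕ):ℝ))⁻¹ := (Real.rpow_pos_of_pos (inv_pos.2 ht0) _).le
      rw [← s_cube2 ht0, ← volume_ball_E3 x hs0]
      exact measure_mono inter_subset_right
    refine step.trans ?_
    rw [lintegral_mul_const _ (by fun_prop : Measurable fun t : ℝ => ENNReal.ofReal (t ^ (-(3/2):ℝ))),
      lint_rpow_Ioi (by norm_num : (-(3/2):ℝ) < -1) one_pos]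
    refine mul_le_mul_left (ENNReal.ofReal_le_ofReal ?_) B
    rw [Real.one_rpow]
    norm_num
  exact add_le_add h1 h2

lemma est_cyl_far (A : ℝ) (hA : 0 < A) (x : E3) {r₀ : ℝ} (hr0 : 0 < r₀) :
    ∫⁻ z in cyl A ∩ {z : E3 | r₀ ≤ ‖x - z‖}, ENNReal.ofReal ((‖x - z‖ ^ 3)⁻¹)
      ≤ ENNReal.ofReal (12 * A ^ 2) +
        ENNReal.ofReal (3 * max 0 (Real.log r₀⁻¹)) * volume (Metric.ball (0:E3) 1) := by
  set B := volume (Metric.ball (0:E3) 1) with hB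
  have hSm : MeasurableSet (cyl A ∩ {z : E3 | r₀ ≤ ‖x - z‖}) :=
    (cyl_mble A).inter ((norm_sub_meas x) measurableSet_Ici)
  refine le_trans (layer_le _ hSm x 3 three_pos) ?_
  rw [← Ioc_union_Ioi_eq_Ioi (zero_le_one : (0:ℝ) ≤ 1),
    lintegral_union measurableSet_Ioi (Set.Ioc_disjoint_Ioi le_rfl)]
  set S := cyl A ∩ {z : E3 | r₀ ≤ ‖x - z‖} with hS
  have h1 : ∫⁻ t in Ioc (0:ℝ) 1, volume (S ∩ Metric.ball x ((t⁻¹) ^ (((3:ℕ):ℝ))⁻¹))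
      ≤ ENNReal.ofReal (12 * A ^ 2) := by
    have step : ∫⁻ t in Ioc (0:ℝ) 1, volume (S ∩ Metric.ball x ((t⁻¹) ^ (((3:ℕ):ℝ))⁻¹))
        ≤ ∫⁻ t in Ioc (0:ℝ) 1, ENNReal.ofReal (8 * A ^ 2) * ENNReal.ofReal (t ^ (-(1/3):ℝ)) := by
      refine lintegral_mono_ae ?_
      filter_upwards [ae_restrict_mem measurableSet_Ioc] with t ht
      have ht0 : 0 < t := ht.1
      have hs0 : 0 < (t⁻¹) ^ (((3:ℕ):ℝ))⁻¹ := Real.rpow_pos_of_pos (inv_pos.2 ht0) _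
      refine le_trans (measure_mono (inter_subset_inter_left _ inter_subset_left)) ?_
      refine le_trans (slab A hA x hs0) ?_
      rw [s_val3 ht0, ← ENNReal.ofReal_mul (by positivity)]
    refine step.trans ?_
    rw [lintegral_const_mul _ (by fun_prop : Measurable fun t : ℝ => ENNReal.ofReal (t ^ (-(1/3):ℝ))),
      lint_rpow_Ioc (by norm_num : (-1:ℝ) < -(1/3)) one_pos]
    rw [← ENNReal.ofReal_mul (by positivity)]
    apply ENNReal.ofReal_le_ofReal
    rw [Real.one_rpow]
    norm_num
    linarith
  have h2 : ∫⁻ t in Ioi (1:ℝ), volume (S ∩ Metric.ball x ((t⁻¹) ^ (((3:ℕ):ℝ))⁻¹))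
      ≤ ENNReal.ofReal (3 * max 0 (Real.log r₀⁻¹)) * B := by
    set T : ℝ := max 1 ((r₀ ^ 3)⁻¹) with hT
    have hT1 : (1:ℝ) ≤ T := le_max_left _ _
    have step : ∫⁻ t in Ioi (1:ℝ), volume (S ∩ Metric.ball x ((t⁻¹) ^ (((3:ℕ):ℝ))⁻¹))
        ≤ ∫⁻ t in Ioi (1:ℝ), (Ioc (1:ℝ) T).indicator (fun t => ENNReal.ofReal t⁻¹ * B) t := by
      refine lintegral_mono_ae ?_
      filter_upwards [ae_restrict_mem measurableSet_Ioi] with t ht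
      have ht0 : (0:ℝ) < t := lt_trans one_pos ht
      by_cases htT : t ≤ T
      · rw [Set.indicator_of_mem (Set.mem_Ioc.2 ⟨ht, htT⟩)]
        have hs0 : (0:ℝ) ≤ (t⁻¹) ^ (((3:ℕ):ℝ))⁻¹ := (Real.rpow_pos_of_pos (inv_pos.2 ht0) _).le
        refine le_trans (measure_mono inter_subset_right) (le_of_eq ?_)
        rw [volume_ball_E3 x hs0, s_cube3 ht0]
      · push_neg at htT
        have hempty : S ∩ Metric.ball x ((t⁻¹) ^ (((3:ℕ):ℝ))⁻¹) = ∅ := by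
          ext z
          simp only [mem_inter_iff, mem_empty_iff_false, iff_false, not_and]
          rintro ⟨_, hz2⟩ hz3
          have hz2' : r₀ ≤ ‖x - z‖ := hz2
          rw [Metric.mem_ball, dist_comm, dist_eq_norm] at hz3
          have hsr : (t⁻¹) ^ (((3:ℕ):ℝ))⁻¹ < r₀ := by
            have hti : t⁻¹ < r₀ ^ 3 := by
              have h1 : (r₀ ^ 3)⁻¹ < t := lt_of_le_of_lt (le_max_right _ _) htT
              have h2 := inv_strictAnti₀ (by positivity) h1
              rwa [inv_inv] at h2
            have := Real.rpow_lt_rpow (inv_nonneg.2 ht0.le) hti (by norm_num : (0:ℝ) < (((3:ℕ):ℝ))⁻¹)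
            rwa [← Real.rpow_natCast r₀ 3, ← Real.rpow_mul hr0.le,
              mul_inv_cancel₀ (by norm_num : ((3:ℕ):ℝ) ≠ 0), Real.rpow_one] at this
          linarith
        rw [hempty]
        simp
    refine step.trans ?_
    rw [lintegral_indicator measurableSet_Ioc, Measure.restrict_restrict measurableSet_Ioc,
      inter_eq_left.2 (Ioc_subset_Ioi_self)]
    rw [lintegral_mul_const _ (by fun_prop : Measurable fun t : ℝ => ENNReal.ofReal t⁻¹),
      lint_inv_Ioc one_pos hT1]
    refine mul_le_mul_left (ENNReal.ofReal_le_ofReal ?_) B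
    rw [div_one]
    rcases le_total ((r₀ ^ 3)⁻¹) 1 with hc | hc
    · rw [hT, max_eq_left hc, Real.log_one]
      positivity
    · rw [hT, max_eq_right hc, Real.log_inv, Real.log_pow, Real.log_inv]
      have h3 := le_max_right (0:ℝ) (-Real.log r₀)
      push_cast
      linarith
  exact add_le_add h1 h2

lemma real_ker {a b d : ℝ} (ha : 0 < a) (hd0 : 0 ≤ d) (h2d : 2 * d ≤ a)
    (hab : |a - b| ≤ d) : |(a ^ 3)⁻¹ - (b ^ 3)⁻¹| * b ≤ 57 * d * (a ^ 3)⁻¹ := by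
  have hb1 : a - d ≤ b := by
    have := abs_le.1 hab; linarith [this.2]
  have hbpos : 0 < b := by linarith
  have hba : a ≤ 2 * b := by linarith
  have key : (a ^ 3)⁻¹ - (b ^ 3)⁻¹ = (b ^ 3 - a ^ 3) / (a ^ 3 * b ^ 3) := by
    field_simp
  have habs : |(a ^ 3)⁻¹ - (b ^ 3)⁻¹| = |b ^ 3 - a ^ 3| / (a ^ 3 * b ^ 3) := by
    rw [key, abs_div, abs_of_pos (show (0:ℝ) < a ^ 3 * b ^ 3 by positivity)]
  have h2 : |b ^ 3 - a ^ 3| ≤ d * (b ^ 2 + a * b + a ^ 2) := by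
    have hfac : b ^ 3 - a ^ 3 = (b - a) * (b ^ 2 + a * b + a ^ 2) := by ring
    rw [hfac, abs_mul, abs_of_nonneg (show (0:ℝ) ≤ b ^ 2 + a * b + a ^ 2 by positivity)]
    refine mul_le_mul_of_nonneg_right ?_ (by positivity)
    rw [abs_sub_comm]; exact hab
  rw [habs]
  rw [div_mul_eq_mul_div, div_le_iff₀ (by positivity)]
  have h7 : b ^ 2 + a * b + a ^ 2 ≤ 7 * b ^ 2 := by nlinarith
  have hrhs : 57 * d * (a ^ 3)⁻¹ * (a ^ 3 * b ^ 3) = 57 * d * b ^ 3 := by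
    field_simp
  rw [hrhs]
  have hmul : |b ^ 3 - a ^ 3| * b ≤ (d * (b ^ 2 + a * b + a ^ 2)) * b :=
    mul_le_mul_of_nonneg_right h2 hbpos.le
  refine hmul.trans ?_
  nlinarith [mul_nonneg (mul_nonneg hd0 hbpos.le) (by linarith : (0:ℝ) ≤ 7 * b ^ 2 - (b ^ 2 + a * b + a ^ 2)),
    mul_nonneg hd0 (pow_nonneg hbpos.le 3)]

lemma ker_diff (u v : E3) (hd : 2 * ‖u - v‖ ≤ ‖u‖) :
    ‖(‖u‖ ^ 3)⁻¹ • u - (‖v‖ ^ 3)⁻¹ • v‖ ≤ 58 * ‖u - v‖ * (‖u‖ ^ 3)⁻¹ := by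
  by_cases hu : u = 0
  · have hv : v = 0 := by
      have h1 : ‖u - v‖ = ‖v‖ := by rw [hu, zero_sub, norm_neg]
      rw [h1, hu, norm_zero] at hd
      have := norm_nonneg v
      have : ‖v‖ = 0 := by linarith
      exact norm_eq_zero.1 this
    simp [hu, hv]
  have ha : 0 < ‖u‖ := norm_pos_iff.2 hu
  have hd0 : 0 ≤ ‖u - v‖ := norm_nonneg _
  have hab : |‖u‖ - ‖v‖| ≤ ‖u - v‖ := abs_norm_sub_norm_le u v
  have hid : (‖u‖ ^ 3)⁻¹ • u - (‖v‖ ^ 3)⁻¹ • v =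
      (‖u‖ ^ 3)⁻¹ • (u - v) + ((‖u‖ ^ 3)⁻¹ - (‖v‖ ^ 3)⁻¹) • v := by
    rw [smul_sub, sub_smul]
    abel
  rw [hid]
  refine le_trans (norm_add_le _ _) ?_
  rw [norm_smul, norm_smul, Real.norm_eq_abs, Real.norm_eq_abs,
    abs_of_pos (by positivity : (0:ℝ) < (‖u‖ ^ 3)⁻¹)]
  have hker := real_ker ha hd0 hd hab
  have : (58:ℝ) * ‖u - v‖ * (‖u‖ ^ 3)⁻¹ =
      (‖u‖ ^ 3)⁻¹ * ‖u - v‖ + 57 * ‖u - v‖ * (‖u‖ ^ 3)⁻¹ := by ring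
  rw [this]
  exact add_le_add le_rfl hker

lemma norm_F_eq {ρ : E3 → ℝ} (hnn : ∀ x, 0 ≤ ρ x) (x z : E3) :
    ‖(ρ z / ‖x - z‖ ^ 3) • (x - z)‖ = ρ z * (‖x - z‖ ^ 2)⁻¹ := by
  rw [norm_smul, Real.norm_eq_abs,
    abs_of_nonneg (div_nonneg (hnn z) (by positivity))]
  by_cases hxz : x = z
  · simp [hxz]
  · have h0 : ‖x - z‖ ≠ 0 := by
      simp [sub_eq_zero, hxz]
    field_simp

lemma F_meas {ρ : E3 → ℝ} (hm : Measurable ρ) (x : E3) :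
    AEStronglyMeasurable (fun z => (ρ z / ‖x - z‖ ^ 3) • (x - z)) (volume : Measure E3) :=
  ((hm.div ((norm_sub_meas x).pow_const 3)).smul
    (measurable_const.sub measurable_id)).aestronglyMeasurable

lemma norm_F_le {A M : ℝ} {ρ : E3 → ℝ} (hnn : ∀ x, 0 ≤ ρ x) (hbd : ∀ x, ρ x ≤ M)
    (hsupp : ∀ x, x ∉ cyl A → ρ x = 0) (x z : E3) :
    ‖(ρ z / ‖x - z‖ ^ 3) • (x - z)‖ ≤
      (cyl A).indicator (fun z => M * (‖x - z‖ ^ 2)⁻¹) z := by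
  rw [norm_F_eq hnn]
  by_cases hz : z ∈ cyl A
  · rw [Set.indicator_of_mem hz]
    exact mul_le_mul_of_nonneg_right (hbd z) (by positivity)
  · rw [Set.indicator_of_notMem hz, hsupp z hz, zero_mul]

lemma lint_F_le {A M : ℝ} {ρ : E3 → ℝ} (hA : 0 < A) (hM : 0 ≤ M)
    (hnn : ∀ x, 0 ≤ ρ x) (hbd : ∀ x, ρ x ≤ M) (hsupp : ∀ x, x ∉ cyl A → ρ x = 0) (x : E3) :
    ∫⁻ z, ENNReal.ofReal ‖(ρ z / ‖x - z‖ ^ 3) • (x - z)‖ ≤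
      ENNReal.ofReal M * (ENNReal.ofReal (16 * A ^ 2) +
        ENNReal.ofReal 2 * volume (Metric.ball (0:E3) 1)) := by
  have step1 : ∫⁻ z, ENNReal.ofReal ‖(ρ z / ‖x - z‖ ^ 3) • (x - z)‖ ≤
      ∫⁻ z, (cyl A).indicator (fun z => ENNReal.ofReal (M * (‖x - z‖ ^ 2)⁻¹)) z := by
    refine lintegral_mono fun z => ?_
    by_cases hz : z ∈ cyl A
    · rw [Set.indicator_of_mem hz]
      refine ENNReal.ofReal_le_ofReal ?_
      have := norm_F_le hnn hbd hsupp x z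
      rwa [Set.indicator_of_mem hz] at this
    · rw [Set.indicator_of_notMem hz]
      have := norm_F_le hnn hbd hsupp x z
      rw [Set.indicator_of_notMem hz] at this
      simp [le_antisymm this (norm_nonneg _)]
  refine step1.trans ?_
  rw [lintegral_indicator (cyl_mble A)]
  have step2 : ∫⁻ z in cyl A, ENNReal.ofReal (M * (‖x - z‖ ^ 2)⁻¹) =
      ENNReal.ofReal M * ∫⁻ z in cyl A, ENNReal.ofReal ((‖x - z‖ ^ 2)⁻¹) := by
    rw [← lintegral_const_mul _ (by fun_prop : Measurable fun z : E3 => ENNReal.ofReal ((‖x - z‖ ^ 2)⁻¹))]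
    refine lintegral_congr fun z => ?_
    rw [ENNReal.ofReal_mul hM]
  rw [step2]
  exact mul_le_mul_right (est_cyl A hA x) _

lemma integrable_F {A M : ℝ} {ρ : E3 → ℝ} (hA : 0 < A) (hM : 0 ≤ M) (hm : Measurable ρ)
    (hnn : ∀ x, 0 ≤ ρ x) (hbd : ∀ x, ρ x ≤ M) (hsupp : ∀ x, x ∉ cyl A → ρ x = 0) (x : E3) :
    Integrable (fun z => (ρ z / ‖x - z‖ ^ 3) • (x - z)) (volume : Measure E3) := by
  refine ⟨F_meas hm x, ?_⟩
  rw [hasFiniteIntegral_iff_norm]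
  refine lt_of_le_of_lt (lint_F_le hA hM hnn hbd hsupp x) ?_
  refine ENNReal.mul_lt_top ENNReal.ofReal_lt_top ?_
  exact ENNReal.add_lt_top.2 ⟨ENNReal.ofReal_lt_top,
    ENNReal.mul_lt_top ENNReal.ofReal_lt_top measure_ball_lt_top⟩

lemma Efield_bound {A M : ℝ} {ρ : E3 → ℝ} (hA : 0 < A) (hM : 0 ≤ M) (hm : Measurable ρ)
    (hnn : ∀ x, 0 ≤ ρ x) (hbd : ∀ x, ρ x ≤ M) (hsupp : ∀ x, x ∉ cyl A → ρ x = 0) (x : E3) :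
    ‖∫ z : E3, (ρ z / ‖x - z‖ ^ 3) • (x - z)‖ ≤
      M * (16 * A ^ 2 + 2 * (volume (Metric.ball (0:E3) 1)).toReal) := by
  set K : ℝ := (volume (Metric.ball (0:E3) 1)).toReal with hK
  have hK0 : 0 ≤ K := ENNReal.toReal_nonneg
  have hKB : volume (Metric.ball (0:E3) 1) = ENNReal.ofReal K :=
    (ENNReal.ofReal_toReal measure_ball_lt_top.ne).symm
  refine le_trans (norm_integral_le_lintegral_norm _) ?_
  have h1 := lint_F_le hA hM hnn hbd hsupp x
  rw [hKB, ← ENNReal.ofReal_mul (by norm_num : (0:ℝ) ≤ 2),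
    ← ENNReal.ofReal_add (by positivity) (by positivity),
    ← ENNReal.ofReal_mul hM] at h1
  calc (∫⁻ z, ENNReal.ofReal ‖(ρ z / ‖x - z‖ ^ 3) • (x - z)‖).toReal
      ≤ (ENNReal.ofReal (M * (16 * A ^ 2 + 2 * K))).toReal := by
        exact ENNReal.toReal_mono ENNReal.ofReal_ne_top h1
    _ = M * (16 * A ^ 2 + 2 * K) := ENNReal.toReal_ofReal (by positivity)

/-- The electric field generated by the density `ρ`. -/
def Efield (ρ : E3 → ℝ) (x : E3) : E3 := ∫ y : E3, (ρ y / ‖x - y‖ ^ 3) • (x - y)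

/-- Quasi-Lipschitz property of the electric field generated by a bounded density supported
in the cylinder of radius `A`: `|E(x)−E(y)| ≤ C M |x−y| (1 + |log|x−y||)` for `|x−y| ≤ 1`,
and `|E(x)−E(y)| ≤ C M |x−y|` for `|x−y| ≥ 1`, with `C` depending only on `A`. -/
theorem field_quasi_lipschitz
    (A : ℝ) (hA : 0 < A) :
    ∃ C : ℝ, 0 < C ∧
      ∀ M : ℝ, 0 < M →
        ∀ ρ : E3 → ℝ, Measurable ρ → (∀ x, 0 ≤ ρ x) → (∀ x, ρ x ≤ M) →
          (∀ x, x ∉ cyl A → ρ x = 0) →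
          ∀ x y : E3,
            (0 < ‖x - y‖ → ‖x - y‖ ≤ 1 →
              ‖Efield ρ x - Efield ρ y‖ ≤
                C * M * ‖x - y‖ * (1 + |Real.log ‖x - y‖|)) ∧
            (1 ≤ ‖x - y‖ → ‖Efield ρ x - Efield ρ y‖ ≤ C * M * ‖x - y‖) := by
  set K : ℝ := (volume (Metric.ball (0:E3) 1)).toReal with hKdef
  have hK0 : 0 < K :=
    ENNReal.toReal_pos (Metric.measure_ball_pos volume 0 one_pos).ne' measure_ball_lt_top.ne
  have hKB : volume (Metric.ball (0:E3) 1) = ENNReal.ofReal K :=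
    (ENNReal.ofReal_toReal measure_ball_lt_top.ne).symm
  refine ⟨1000 * (A ^ 2 + K + 1), by positivity, ?_⟩
  set C : ℝ := 1000 * (A ^ 2 + K + 1) with hCdef
  have hC0 : 0 < C := by positivity
  intro M hM ρ hm hnn hbd hsupp x y
  have hIx := integrable_F hA hM.le hm hnn hbd hsupp x
  have hIy := integrable_F hA hM.le hm hnn hbd hsupp y
  have hsub : Efield ρ x - Efield ρ y =
      ∫ z : E3, ((ρ z / ‖x - z‖ ^ 3) • (x - z) - (ρ z / ‖y - z‖ ^ 3) • (y - z)) :=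
    (integral_sub hIx hIy).symm
  constructor
  · -- small distance branch
    intro hpos hle1
    set h : ℝ := ‖x - y‖ with hhdef
    rw [hsub]
    refine le_trans (norm_integral_le_lintegral_norm _) ?_
    have hLabs0 : 0 ≤ |Real.log h| := abs_nonneg _
    refine ENNReal.toReal_le_of_le_ofReal (by positivity) ?_
    set F : E3 → E3 → E3 := fun w z => (ρ z / ‖w - z‖ ^ 3) • (w - z) with hF
    have hball : MeasurableSet (Metric.ball x (2 * h)) := measurableSet_ball
    rw [← lintegral_add_compl (fun z => ENNReal.ofReal ‖F x z - F y z‖) hball]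
    -- near piece
    have hFx_norm : ∀ w z : E3, ‖F w z‖ ≤ M * (‖w - z‖ ^ 2)⁻¹ := by
      intro w z
      rw [hF, norm_F_eq hnn]
      exact mul_le_mul_of_nonneg_right (hbd z) (by positivity)
    have hnear : ∫⁻ z in Metric.ball x (2 * h), ENNReal.ofReal ‖F x z - F y z‖ ≤
        ENNReal.ofReal (M * (3 * (2 * h)) * K) + ENNReal.ofReal (M * (3 * (3 * h)) * K) := by
      have hpt : ∀ z : E3, ENNReal.ofReal ‖F x z - F y z‖ ≤
          ENNReal.ofReal (M * (‖x - z‖ ^ 2)⁻¹) + ENNReal.ofReal (M * (‖y - z‖ ^ 2)⁻¹) := by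
        intro z
        refine le_trans (ENNReal.ofReal_le_ofReal
          (le_trans (norm_sub_le _ _) (add_le_add (hFx_norm x z) (hFx_norm y z))))
          ENNReal.ofReal_add_le
      refine le_trans (lintegral_mono hpt) ?_
      rw [lintegral_add_left (by fun_prop : Measurable fun z : E3 => ENNReal.ofReal (M * (‖x - z‖ ^ 2)⁻¹))]
      have hmul : ∀ w : E3, ∀ z : E3, ENNReal.ofReal (M * (‖w - z‖ ^ 2)⁻¹) =
          ENNReal.ofReal M * ENNReal.ofReal ((‖w - z‖ ^ 2)⁻¹) := fun w z =>
        ENNReal.ofReal_mul hM.le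
      have p1 : ∫⁻ z in Metric.ball x (2 * h), ENNReal.ofReal (M * (‖x - z‖ ^ 2)⁻¹) ≤
          ENNReal.ofReal (M * (3 * (2 * h)) * K) := by
        simp_rw [hmul x]
        rw [lintegral_const_mul _ (by fun_prop : Measurable fun z : E3 => ENNReal.ofReal ((‖x - z‖ ^ 2)⁻¹))]
        refine le_trans (mul_le_mul_right (est_ball x (by positivity : (0:ℝ) < 2 * h)) _) ?_
        rw [hKB, ← ENNReal.ofReal_mul (by positivity), ← ENNReal.ofReal_mul hM.le]
        exact le_of_eq (by ring_nf)
      have p2 : ∫⁻ z in Metric.ball x (2 * h), ENNReal.ofReal (M * (‖y - z‖ ^ 2)⁻¹) ≤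
          ENNReal.ofReal (M * (3 * (3 * h)) * K) := by
        have hss : Metric.ball x (2 * h) ⊆ Metric.ball y (3 * h) := by
          intro z hz
          rw [Metric.mem_ball] at hz ⊢
          have hxy : dist x y = h := by rw [dist_eq_norm]
          calc dist z y ≤ dist z x + dist x y := dist_triangle z x y
            _ < 2 * h + h := by rw [hxy]; linarith
            _ = 3 * h := by ring
        refine le_trans (lintegral_mono_set hss) ?_
        simp_rw [hmul y]
        rw [lintegral_const_mul _ (by fun_prop : Measurable fun z : E3 => ENNReal.ofReal ((‖y - z‖ ^ 2)⁻¹))]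
        refine le_trans (mul_le_mul_right (est_ball y (by positivity : (0:ℝ) < 3 * h)) _) ?_
        rw [hKB, ← ENNReal.ofReal_mul (by positivity), ← ENNReal.ofReal_mul hM.le]
        exact le_of_eq (by ring_nf)
      exact add_le_add p1 p2
    -- far piece
    set L : ℝ := max 0 (Real.log (2 * h)⁻¹) with hLdef
    have hL0 : 0 ≤ L := le_max_left _ _
    have hfar : ∫⁻ z in (Metric.ball x (2 * h))ᶜ, ENNReal.ofReal ‖F x z - F y z‖ ≤
        ENNReal.ofReal (58 * M * h * (12 * A ^ 2 + 3 * L * K)) := by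
      have hpt : ∀ z ∈ (Metric.ball x (2 * h))ᶜ, ENNReal.ofReal ‖F x z - F y z‖ ≤
          (cyl A).indicator (fun z => ENNReal.ofReal (58 * M * h) *
            ENNReal.ofReal ((‖x - z‖ ^ 3)⁻¹)) z := by
        intro z hz
        by_cases hzc : z ∈ cyl A
        · rw [Set.indicator_of_mem hzc, ← ENNReal.ofReal_mul (by positivity)]
          refine ENNReal.ofReal_le_ofReal ?_
          have hdist : 2 * h ≤ ‖x - z‖ := by
            rw [mem_compl_iff, Metric.mem_ball, not_lt, dist_comm, dist_eq_norm] at hz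
            exact hz
          have hker : ‖(‖x - z‖ ^ 3)⁻¹ • (x - z) - (‖y - z‖ ^ 3)⁻¹ • (y - z)‖ ≤
              58 * h * (‖x - z‖ ^ 3)⁻¹ := by
            have huv : (x - z) - (y - z) = x - y := by abel
            have := ker_diff (x - z) (y - z) (by rw [huv]; exact hdist)
            rwa [huv] at this
          have hdec : F x z - F y z =
              ρ z • ((‖x - z‖ ^ 3)⁻¹ • (x - z) - (‖y - z‖ ^ 3)⁻¹ • (y - z)) := by
            show (ρ z / ‖x - z‖ ^ 3) • (x - z) - (ρ z / ‖y - z‖ ^ 3) • (y - z) = _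
            rw [div_eq_mul_inv, div_eq_mul_inv, mul_smul, mul_smul, ← smul_sub]
          rw [hdec, norm_smul, Real.norm_eq_abs, abs_of_nonneg (hnn z)]
          calc ρ z * ‖(‖x - z‖ ^ 3)⁻¹ • (x - z) - (‖y - z‖ ^ 3)⁻¹ • (y - z)‖
              ≤ M * (58 * h * (‖x - z‖ ^ 3)⁻¹) :=
                mul_le_mul (hbd z) hker (norm_nonneg _) hM.le
            _ = 58 * M * h * (‖x - z‖ ^ 3)⁻¹ := by ring
        · rw [Set.indicator_of_notMem hzc]
          have hz0 : ρ z = 0 := hsupp z hzc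
          have hFz : F x z - F y z = 0 := by
            show (ρ z / ‖x - z‖ ^ 3) • (x - z) - (ρ z / ‖y - z‖ ^ 3) • (y - z) = 0
            simp [hz0]
          simp [hFz]
      have hmono : ∫⁻ z in (Metric.ball x (2 * h))ᶜ, ENNReal.ofReal ‖F x z - F y z‖ ≤
          ∫⁻ z in (Metric.ball x (2 * h))ᶜ, (cyl A).indicator (fun z =>
            ENNReal.ofReal (58 * M * h) * ENNReal.ofReal ((‖x - z‖ ^ 3)⁻¹)) z := by
        refine lintegral_mono_ae ?_
        filter_upwards [ae_restrict_mem hball.compl] with z hz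
        exact hpt z hz
      refine hmono.trans ?_
      rw [lintegral_indicator (cyl_mble A), Measure.restrict_restrict (cyl_mble A)]
      have hsubset : cyl A ∩ (Metric.ball x (2 * h))ᶜ ⊆ cyl A ∩ {z : E3 | 2 * h ≤ ‖x - z‖} := by
        rintro z ⟨h1, h2⟩
        refine ⟨h1, ?_⟩
        rw [mem_compl_iff, Metric.mem_ball, not_lt, dist_comm, dist_eq_norm] at h2
        exact h2
      refine le_trans (lintegral_mono_set hsubset) ?_
      rw [lintegral_const_mul _ (by fun_prop : Measurable fun z : E3 => ENNReal.ofReal ((‖x - z‖ ^ 3)⁻¹))]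
      refine le_trans (mul_le_mul_right
        (est_cyl_far A hA x (by positivity : (0:ℝ) < 2 * h)) _) ?_
      have hmax0 : (0:ℝ) ≤ 3 * max 0 (Real.log (2 * h)⁻¹) :=
        mul_nonneg (by norm_num) (le_max_left _ _)
      rw [hKB, ← ENNReal.ofReal_mul hmax0, ← ENNReal.ofReal_add (by positivity)
        (mul_nonneg hmax0 hK0.le), ← ENNReal.ofReal_mul (by positivity)]
    refine le_trans (add_le_add hnear hfar) ?_
    have hfarnn : (0:ℝ) ≤ 58 * M * h * (12 * A ^ 2 + 3 * L * K) := by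
      refine mul_nonneg (by positivity) ?_
      have := mul_nonneg (mul_nonneg (by norm_num : (0:ℝ) ≤ 3) hL0) hK0.le
      nlinarith [sq_nonneg A]
    rw [← ENNReal.ofReal_add (by positivity) (by positivity),
      ← ENNReal.ofReal_add (by positivity) hfarnn]
    apply ENNReal.ofReal_le_ofReal
    have hLle : L ≤ |Real.log h| := by
      rw [hLdef]
      refine max_le hLabs0 ?_
      have hsplit : Real.log (2 * h)⁻¹ = -(Real.log 2 + Real.log h) := by
        rw [Real.log_inv, Real.log_mul two_ne_zero hpos.ne']
      have hlog2 : 0 ≤ Real.log 2 := Real.log_nonneg one_le_two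
      have hneg : -Real.log h ≤ |Real.log h| := neg_le_abs _
      rw [hsplit]
      linarith
    rw [hCdef]
    nlinarith [mul_pos hM hpos, hK0, hLabs0, hL0, sq_nonneg A,
      mul_nonneg (mul_nonneg hM.le hpos.le) hLabs0,
      mul_nonneg (mul_nonneg (mul_nonneg hM.le hpos.le) hK0.le) (sub_nonneg.2 hLle),
      mul_nonneg (mul_nonneg (mul_nonneg hM.le hpos.le) hLabs0) hK0.le,
      mul_nonneg (mul_nonneg (mul_nonneg hM.le hpos.le) hLabs0) (sq_nonneg A),
      mul_nonneg (mul_nonneg hM.le hpos.le) (sq_nonneg A),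
      mul_nonneg (mul_nonneg hM.le hpos.le) hK0.le]
  · -- large distance branch
    intro h1
    have hbx := Efield_bound hA hM.le hm hnn hbd hsupp x
    have hby := Efield_bound hA hM.le hm hnn hbd hsupp y
    have hb : ‖Efield ρ x - Efield ρ y‖ ≤ 2 * (M * (16 * A ^ 2 + 2 * K)) := by
      refine le_trans (norm_sub_le _ _) ?_
      have e1 : ‖Efield ρ x‖ ≤ M * (16 * A ^ 2 + 2 * K) := hbx
      have e2 : ‖Efield ρ y‖ ≤ M * (16 * A ^ 2 + 2 * K) := hby
      linarith
    refine hb.trans ?_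
    have hCM : 2 * (M * (16 * A ^ 2 + 2 * K)) ≤ C * M := by
      rw [hCdef]
      nlinarith [sq_nonneg A, hK0, hM]
    refine hCM.trans ?_
    calc C * M = C * M * 1 := by ring
      _ ≤ C * M * ‖x - y‖ := by
          refine mul_le_mul_of_nonneg_left h1 (by positivity)
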